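/- Under the assumption w = w_L e_L (with w_L ≠ 0) and Γ = γ e_L, the ReLU-loss gradient with respect to w_L is a_L Φ(b/‖w‖) + ρ(c − ρ a_L b/‖w‖)φ(b/‖w‖), and the gradient with respect to any coordinate w_i for i ≠ L is zero, where ρ = sign(w_L), a_L = w_L − γ. -/

import Mathlib

open MeasureTheory ProbabilityTheory Matrix

/-- The standard multivariate Gaussian `N(0, I_L)` on `ℝ^L`. -/
noncomputable def stdGaussian (L : ℕ) : Measure (Fin L → ℝ) :=
  Measure.pi fun _ => gaussianReal 0 1

/-- Euclidean norm of a vector in `ℝ^L`. -/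
noncomputable def l2norm {L : ℕ} (v : Fin L → ℝ) : ℝ :=
  Real.sqrt (∑ i, (v i) ^ 2)

/-- The standard normal pdf `φ`. -/
noncomputable def phiPdf (t : ℝ) : ℝ :=
  Real.exp (-t ^ 2 / 2) / Real.sqrt (2 * Real.pi)

/-- The standard normal CDF `Φ`. -/
noncomputable def Phi (t : ℝ) : ℝ :=
  ∫ s in Set.Iic t, phiPdf s

section Helpers
open Set Real Filter
open scoped ENNReal NNReal

lemma phiPdf_eq' (t : ℝ) : phiPdf t = (Real.sqrt (2 * Real.pi))⁻¹ * Real.exp (-(1/2) * t ^ 2) := by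
  rw [phiPdf, div_eq_inv_mul]; ring_nf

lemma hasDerivAt_neg_phiPdf (t : ℝ) :
    HasDerivAt (fun u => -phiPdf u) (t * phiPdf t) t := by
  have h : HasDerivAt (fun u : ℝ => -u ^ 2 / 2) (-t) t := by
    have := ((hasDerivAt_pow 2 t).neg).div_const 2
    simpa using this.congr_deriv (by ring)
  have h2 : HasDerivAt (fun u : ℝ => Real.exp (-u ^ 2 / 2)) (Real.exp (-t^2/2) * (-t)) t :=
    (Real.hasDerivAt_exp _).comp t h
  have h3 : HasDerivAt (fun u => phiPdf u) (Real.exp (-t^2/2) * (-t) / Real.sqrt (2 * Real.pi)) t :=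
    h2.div_const _
  have : HasDerivAt (fun u => -phiPdf u) _ t := h3.neg
  convert this using 1
  simp [phiPdf]; ring

lemma integrable_mul_phiPdf : Integrable (fun t : ℝ => t * phiPdf t) := by
  simp_rw [phiPdf_eq']
  have := (integrable_mul_exp_neg_mul_sq (b := 1/2) (by norm_num)).const_mul (Real.sqrt (2 * Real.pi))⁻¹
  exact this.congr (ae_of_all _ fun t => by simp; ring)

lemma integrable_sq_mul_phiPdf : Integrable (fun t : ℝ => t ^ 2 * phiPdf t) := by
  simp_rw [phiPdf_eq']
  have h := integrable_rpow_mul_exp_neg_mul_sq (b := 1/2) (by norm_num) (s := 2) (by norm_num)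
  have h2 : Integrable (fun t : ℝ => t ^ 2 * Real.exp (-(1/2) * t ^ 2)) := by
    rw [show (fun x : ℝ => x ^ (2:ℝ) * Real.exp (-(1/2) * x ^ 2))
        = (fun x : ℝ => x ^ (2:ℕ) * Real.exp (-(1/2) * x ^ 2)) from
      funext fun x => by rw [← Real.rpow_natCast x 2]; norm_num] at h
    exact h
  exact ((h2.const_mul (Real.sqrt (2 * Real.pi))⁻¹).congr (ae_of_all _ fun t => by simp; ring))

lemma tendsto_phiPdf_atTop : Tendsto phiPdf atTop (nhds 0) := by
  have hsq : Tendsto (fun t : ℝ => t ^ 2 / 2) atTop atTop :=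
    (tendsto_pow_atTop (two_ne_zero)).atTop_div_const (by norm_num)
  have h : Tendsto (fun t : ℝ => -t ^ 2 / 2) atTop atBot := by
    have := tendsto_neg_atTop_atBot.comp hsq
    apply this.congr
    intro t; simp [Function.comp]; ring
  have h4 : Tendsto (fun t : ℝ => Real.exp (-t^2/2)) atTop (nhds 0) := Real.tendsto_exp_atBot.comp h
  have := h4.div_const (Real.sqrt (2 * Real.pi))
  unfold phiPdf
  simpa using this

lemma tendsto_mul_phiPdf_atTop : Tendsto (fun t : ℝ => t * phiPdf t) atTop (nhds 0) := by
  have h := rpow_mul_exp_neg_mul_sq_isLittleO_exp_neg (b := 1/2) (by norm_num) 1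
  have hlin : Tendsto (fun x : ℝ => -(1/2) * x) atTop atBot := by
    have h1 : Tendsto (fun x : ℝ => x / 2) atTop atTop := tendsto_id.atTop_div_const (by norm_num)
    have := tendsto_neg_atTop_atBot.comp h1
    apply this.congr; intro x; simp [Function.comp]; ring
  have h2 : Tendsto (fun t : ℝ => t ^ (1:ℝ) * Real.exp (-(1/2) * t ^ 2)) atTop (nhds 0) :=
    h.tendsto_zero_of_tendsto (Real.tendsto_exp_atBot.comp hlin)
  have h3 : Tendsto (fun t : ℝ => (Real.sqrt (2 * Real.pi))⁻¹ * (t ^ (1:ℝ) * Real.exp (-(1/2) * t ^ 2))) atTop (nhds 0) := by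
    simpa using h2.const_mul (Real.sqrt (2 * Real.pi))⁻¹
  apply h3.congr'
  filter_upwards [eventually_gt_atTop (0:ℝ)] with t ht
  rw [Real.rpow_one, phiPdf_eq']; ring

lemma phiPdf_even (t : ℝ) : phiPdf (-t) = phiPdf t := by simp [phiPdf]

lemma phiPdf_eq : phiPdf = ProbabilityTheory.gaussianPDFReal 0 1 := by
  funext t
  simp [phiPdf, ProbabilityTheory.gaussianPDFReal, div_eq_inv_mul, mul_comm]

lemma integral_phiPdf : ∫ t, phiPdf t = 1 := by
  rw [phiPdf_eq]; exact ProbabilityTheory.integral_gaussianPDFReal_eq_one 0 one_ne_zero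

lemma integrable_phiPdf : Integrable phiPdf := by
  rw [phiPdf_eq]; exact ProbabilityTheory.integrable_gaussianPDFReal 0 1


lemma tendsto_mul_phiPdf_atBot : Tendsto (fun t : ℝ => t * phiPdf t) atBot (nhds 0) := by
  have := (tendsto_mul_phiPdf_atTop.comp tendsto_neg_atBot_atTop).neg
  rw [neg_zero] at this
  apply this.congr
  intro t; simp [Function.comp, phiPdf_even]

lemma int_phi_Ioi (a : ℝ) : ∫ t in Set.Ioi a, phiPdf t = 1 - Phi a := by
  have h := intervalIntegral.integral_Iic_add_Ioi (b := a) (μ := volume) (f := phiPdf)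
    integrable_phiPdf.integrableOn integrable_phiPdf.integrableOn
  rw [integral_phiPdf] at h
  rw [Phi]; linarith

lemma Phi_neg (s : ℝ) : Phi (-s) = 1 - Phi s := by
  have h : ∫ t in Set.Ioi s, phiPdf (-t) = ∫ t in Set.Iic (-s), phiPdf t :=
    integral_comp_neg_Ioi s phiPdf
  simp_rw [phiPdf_even] at h
  rw [Phi, ← h, int_phi_Ioi]

lemma int_mul_Ioi (a : ℝ) : ∫ t in Set.Ioi a, t * phiPdf t = phiPdf a := by
  have h := integral_Ioi_of_hasDerivAt_of_tendsto' (f := fun u => -phiPdf u)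
    (f' := fun t => t * phiPdf t) (a := a) (m := 0)
    (fun x _ => hasDerivAt_neg_phiPdf x)
    integrable_mul_phiPdf.integrableOn
    (by have := tendsto_phiPdf_atTop.neg; rwa [neg_zero] at this)
  simpa using h

lemma tendsto_phiPdf_atBot : Tendsto phiPdf atBot (nhds 0) := by
  have := tendsto_phiPdf_atTop.comp tendsto_neg_atBot_atTop
  apply this.congr
  intro t; simp [Function.comp, phiPdf_even]

lemma int_mul_Iic (a : ℝ) : ∫ t in Set.Iic a, t * phiPdf t = -phiPdf a := by
  have h := integral_Iic_of_hasDerivAt_of_tendsto' (f := fun u => -phiPdf u)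
    (f' := fun t => t * phiPdf t) (a := a) (m := 0)
    (fun x _ => hasDerivAt_neg_phiPdf x)
    integrable_mul_phiPdf.integrableOn
    (by have := tendsto_phiPdf_atBot.neg; rwa [neg_zero] at this)
  simpa using h

lemma hasDerivAt_neg_mul_phiPdf (t : ℝ) :
    HasDerivAt (fun u => -(u * phiPdf u)) ((t ^ 2 - 1) * phiPdf t) t := by
  have h1 : HasDerivAt (fun u : ℝ => u * -phiPdf u) (1 * (-phiPdf t) + t * (t * phiPdf t)) t :=
    (hasDerivAt_id t).mul (hasDerivAt_neg_phiPdf t)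
  have h2 : (fun u : ℝ => u * -phiPdf u) = fun u => -(u * phiPdf u) := by funext u; ring
  rw [h2] at h1
  convert h1 using 1; ring

lemma integrable_sq_sub_one_mul_phiPdf : Integrable (fun t : ℝ => (t ^ 2 - 1) * phiPdf t) := by
  have := integrable_sq_mul_phiPdf.sub integrable_phiPdf
  exact this.congr (ae_of_all _ fun t => by simp [Pi.sub_apply]; ring)

lemma int_sq_Ioi (a : ℝ) :
    ∫ t in Set.Ioi a, t ^ 2 * phiPdf t = (1 - Phi a) + a * phiPdf a := by
  have h := integral_Ioi_of_hasDerivAt_of_tendsto' (f := fun u => -(u * phiPdf u))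
    (f' := fun t => (t ^ 2 - 1) * phiPdf t) (a := a) (m := 0)
    (fun x _ => hasDerivAt_neg_mul_phiPdf x)
    integrable_sq_sub_one_mul_phiPdf.integrableOn
    (by have := tendsto_mul_phiPdf_atTop.neg; rwa [neg_zero] at this)
  have hsplit : ∫ t in Set.Ioi a, t ^ 2 * phiPdf t
      = (∫ t in Set.Ioi a, (t ^ 2 - 1) * phiPdf t) + ∫ t in Set.Ioi a, phiPdf t := by
    rw [← integral_add integrable_sq_sub_one_mul_phiPdf.integrableOn
      integrable_phiPdf.integrableOn]
    congr 1; funext t; ring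
  rw [hsplit, h, int_phi_Ioi]; ring

lemma int_sq_Iic (a : ℝ) :
    ∫ t in Set.Iic a, t ^ 2 * phiPdf t = Phi a - a * phiPdf a := by
  have h := integral_Iic_of_hasDerivAt_of_tendsto' (f := fun u => -(u * phiPdf u))
    (f' := fun t => (t ^ 2 - 1) * phiPdf t) (a := a) (m := 0)
    (fun x _ => hasDerivAt_neg_mul_phiPdf x)
    integrable_sq_sub_one_mul_phiPdf.integrableOn
    (by have := tendsto_mul_phiPdf_atBot.neg; rwa [neg_zero] at this)
  have hsplit : ∫ t in Set.Iic a, t ^ 2 * phiPdf t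
      = (∫ t in Set.Iic a, (t ^ 2 - 1) * phiPdf t) + ∫ t in Set.Iic a, phiPdf t := by
    rw [← integral_add integrable_sq_sub_one_mul_phiPdf.integrableOn
      integrable_phiPdf.integrableOn]
    congr 1; funext t; ring
  rw [hsplit, h]
  show -(a * phiPdf a) - 0 + Phi a = _
  ring

open ProbabilityTheory in
lemma integral_gaussianReal_eq (g : ℝ → ℝ) :
    ∫ t, g t ∂gaussianReal 0 1 = ∫ t, g t * phiPdf t := by
  rw [gaussianReal_of_var_ne_zero 0 one_ne_zero]
  have hd : (gaussianPDF 0 1) = fun x => ((fun x => (gaussianPDFReal 0 1 x).toNNReal) x : ℝ≥0∞) := by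
    funext x; rw [gaussianPDF_def]; rfl
  rw [hd, integral_withDensity_eq_integral_smul
    ((measurable_gaussianPDFReal 0 1).real_toNNReal) g]
  congr 1
  funext t
  rw [NNReal.smul_def, smul_eq_mul, Real.coe_toNNReal _ (gaussianPDFReal_nonneg 0 1 t),
    ← phiPdf_eq, mul_comm]

lemma pi_prod_integral {n : ℕ} (μ : Measure ℝ) [SigmaFinite μ] (g : Fin n → ℝ → ℝ) :
    ∫ x : Fin n → ℝ, ∏ i, g i (x i) ∂Measure.pi (fun _ => μ) = ∏ i, ∫ t, g i t ∂μ := by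
  letI : MeasureSpace ℝ := ⟨μ⟩
  exact MeasureTheory.integral_fintype_prod_eq_prod (ι := Fin n) g

lemma integral_id_gaussian : ∫ t : ℝ, t ∂ProbabilityTheory.gaussianReal 0 1 = 0 := by
  rw [integral_gaussianReal_eq]
  have h := intervalIntegral.integral_Iic_add_Ioi (b := 0) (μ := volume)
    (f := fun t : ℝ => t * phiPdf t)
    integrable_mul_phiPdf.integrableOn integrable_mul_phiPdf.integrableOn
  rw [int_mul_Iic, int_mul_Ioi] at h
  linarith

lemma Gaux_mul_integral (wL γ b Δ : ℝ) (hwL : wL ≠ 0) :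
    ∫ t, (if 0 < wL * t + b then (wL - γ) * t + (b - Δ) else 0) * t
        ∂ProbabilityTheory.gaussianReal 0 1 =
      (wL - γ) * Phi (b / |wL|) +
        Real.sign wL * ((b - Δ) - Real.sign wL * (wL - γ) * (b / |wL|)) *
          phiPdf (b / |wL|) := by
  rw [integral_gaussianReal_eq]
  rcases hwL.lt_or_gt with hlt | hgt
  · -- wL < 0 : region t < -(b/wL),  s = b / |wL| = -(b/wL)
    have habs : |wL| = -wL := abs_of_neg hlt
    set s : ℝ := b / |wL| with hs
    have hsval : s = -(b / wL) := by rw [hs, habs, div_neg]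
    have hset : (fun t => (if 0 < wL * t + b then (wL - γ) * t + (b - Δ) else 0) * t * phiPdf t)
        = Set.indicator (Set.Iio s)
            (fun t => (((wL - γ) * t + (b - Δ)) * t) * phiPdf t) := by
      funext t
      have hiff : (0 < wL * t + b) ↔ t ∈ Set.Iio s := by
        rw [Set.mem_Iio, hsval, ← neg_div, lt_div_iff_of_neg hlt]
        constructor <;> intro h <;> nlinarith
      rw [Set.indicator_apply]
      by_cases h : t ∈ Set.Iio s
      · rw [if_pos (hiff.mpr h), if_pos h]
      · rw [if_neg (fun hc => h (hiff.mp hc)), if_neg h, zero_mul, zero_mul]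
    rw [hset, MeasureTheory.integral_indicator measurableSet_Iio]
    have hsplit : ∫ t in Set.Iio s, (((wL - γ) * t + (b - Δ)) * t) * phiPdf t
        = (wL - γ) * (∫ t in Set.Iio s, t ^ 2 * phiPdf t)
          + (b - Δ) * ∫ t in Set.Iio s, t * phiPdf t := by
      rw [← integral_const_mul, ← integral_const_mul,
        ← MeasureTheory.integral_add ((integrable_sq_mul_phiPdf.const_mul _).integrableOn)
          ((integrable_mul_phiPdf.const_mul _).integrableOn)]
      congr 1; funext t; ring
    rw [hsplit, ← MeasureTheory.integral_Iic_eq_integral_Iio,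
      ← MeasureTheory.integral_Iic_eq_integral_Iio, int_sq_Iic, int_mul_Iic,
      Real.sign_of_neg hlt]
    ring
  · -- wL > 0 : region t > -(b/wL), s = b / wL
    have habs : |wL| = wL := abs_of_pos hgt
    set s : ℝ := b / |wL| with hs
    have hsval : s = b / wL := by rw [hs, habs]
    have hset : (fun t => (if 0 < wL * t + b then (wL - γ) * t + (b - Δ) else 0) * t * phiPdf t)
        = Set.indicator (Set.Ioi (-s))
            (fun t => (((wL - γ) * t + (b - Δ)) * t) * phiPdf t) := by
      funext t
      have hiff : (0 < wL * t + b) ↔ t ∈ Set.Ioi (-s) := by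
        rw [Set.mem_Ioi, hsval, ← neg_div, div_lt_iff₀ hgt]
        constructor <;> intro h <;> nlinarith
      rw [Set.indicator_apply]
      by_cases h : t ∈ Set.Ioi (-s)
      · rw [if_pos (hiff.mpr h), if_pos h]
      · rw [if_neg (fun hc => h (hiff.mp hc)), if_neg h, zero_mul, zero_mul]
    rw [hset, MeasureTheory.integral_indicator measurableSet_Ioi]
    have hsplit : ∫ t in Set.Ioi (-s), (((wL - γ) * t + (b - Δ)) * t) * phiPdf t
        = (wL - γ) * (∫ t in Set.Ioi (-s), t ^ 2 * phiPdf t)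
          + (b - Δ) * ∫ t in Set.Ioi (-s), t * phiPdf t := by
      rw [← integral_const_mul, ← integral_const_mul,
        ← MeasureTheory.integral_add ((integrable_sq_mul_phiPdf.const_mul _).integrableOn)
          ((integrable_mul_phiPdf.const_mul _).integrableOn)]
      congr 1; funext t; ring
    rw [hsplit, int_sq_Ioi, int_mul_Ioi, Phi_neg, phiPdf_even, Real.sign_of_pos hgt]
    ring

end Helpers

/-- Under `w = w_L e_L` (with `w_L ≠ 0`) and `Γ = γ e_L`, with the ReLU-loss
gradient `∂L/∂w = E[1_{wᵀx+b>0}(aᵀx+c)x]` where `a = w − Γ`, `c = b − Δ`: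
the gradient w.r.t. `w_L` equals `a_L Φ(b/‖w‖) + ρ(c − ρ a_L b/‖w‖) φ(b/‖w‖)`
with `ρ = sign(w_L)` and `a_L = w_L − γ`, and the gradient w.r.t. any other
coordinate `w_i`, `i ≠ L`, is zero. -/
theorem relu_gradient_aligned (L : ℕ) (wL γ Δ b : ℝ) (hwL : wL ≠ 0)
    (w Γ : Fin (L + 1) → ℝ)
    (hw : w = Pi.single (Fin.last L) wL) (hΓ : Γ = Pi.single (Fin.last L) γ)
    (grad : Fin (L + 1) → ℝ)
    (hgrad : ∀ i, grad i = ∫ x, Set.indicator {x | w ⬝ᵥ x + b > 0}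
      (fun x => ((w - Γ) ⬝ᵥ x + (b - Δ)) * x i) x ∂ stdGaussian (L + 1)) :
    grad (Fin.last L) =
      (wL - γ) * Phi (b / l2norm w) +
        Real.sign wL * ((b - Δ) - Real.sign wL * (wL - γ) * (b / l2norm w)) *
          phiPdf (b / l2norm w) ∧
    ∀ i, i ≠ Fin.last L → grad i = 0 := by
  subst hw hΓ
  set j := Fin.last L with hj
  have key : ∀ i : Fin (L+1), grad i =
      ∏ k, ∫ t, ((if k = j then (if 0 < wL * t + b then (wL - γ) * t + (b - Δ) else 0) else 1)
        * (if k = i then t else 1)) ∂gaussianReal 0 1 := by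
    intro i
    rw [hgrad i]
    have hfun : (fun x : Fin (L+1) → ℝ => Set.indicator {x | Pi.single j wL ⬝ᵥ x + b > 0}
        (fun x => ((Pi.single j wL - Pi.single j γ) ⬝ᵥ x + (b - Δ)) * x i) x)
        = fun x => ∏ k, ((if k = j then
            (if 0 < wL * (x k) + b then (wL - γ) * (x k) + (b - Δ) else 0) else 1)
          * (if k = i then x k else 1)) := by
      funext x
      have hprod : (∏ k, ((if k = j then
            (if 0 < wL * (x k) + b then (wL - γ) * (x k) + (b - Δ) else 0) else 1)
          * (if k = i then x k else 1)))
          = (if 0 < wL * (x j) + b then (wL - γ) * (x j) + (b - Δ) else 0) * x i := by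
        rw [Finset.prod_mul_distrib, Finset.prod_ite_eq' Finset.univ j
          (fun k => if 0 < wL * (x k) + b then (wL - γ) * (x k) + (b - Δ) else 0),
          Finset.prod_ite_eq' Finset.univ i (fun k => x k)]
        simp
      rw [hprod]
      have hdot1 : Pi.single j wL ⬝ᵥ x = wL * x j := single_dotProduct _ _ _
      have hdot2 : (Pi.single j wL - Pi.single j γ) ⬝ᵥ x = (wL - γ) * x j := by
        rw [← Pi.single_sub]; exact single_dotProduct _ _ _
      rw [Set.indicator_apply]
      by_cases h : 0 < wL * x j + b
      · rw [if_pos (by simpa [Set.mem_setOf_eq, hdot1] using h), if_pos h, hdot2]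
      · rw [if_neg (by simpa [Set.mem_setOf_eq, hdot1] using h), if_neg h, zero_mul]
    rw [_root_.stdGaussian, hfun]
    exact pi_prod_integral (gaussianReal 0 1)
      (fun k t => (if k = j then (if 0 < wL * t + b then (wL - γ) * t + (b - Δ) else 0) else 1)
        * (if k = i then t else 1))
  have hnorm : l2norm (Pi.single j wL) = |wL| := by
    rw [l2norm]
    have hsum : ∑ k, (Pi.single j wL k) ^ 2 = wL ^ 2 := by
      rw [Finset.sum_eq_single j]
      · rw [Pi.single_eq_same]
      · intro k _ hk; rw [Pi.single_eq_of_ne hk]; ring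
      · intro h; exact absurd (Finset.mem_univ j) h
    rw [hsum, Real.sqrt_sq_eq_abs]
  constructor
  · rw [key j, Finset.prod_eq_single j (fun k _ hk => by
      simp only [if_neg hk, one_mul]
      simp) (fun h => absurd (Finset.mem_univ j) h)]
    simp only [eq_self_iff_true, if_true]
    rw [hnorm, ← Gaux_mul_integral wL γ b Δ hwL]
  · intro i hij
    rw [key i]
    apply Finset.prod_eq_zero (Finset.mem_univ i)
    simp only [if_neg hij, if_pos rfl, one_mul]
    exact integral_id_gaussian
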